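/- arXiv:1805.09576 — 5 statements merged into one kernel-verified Lean document; each statement's English description precedes it below -/
import Mathlib

section
/- Let m ≥ 1, let A be a real m×m symmetric matrix, and let i be a fixed index. Then equality A_{ii}·(trace(A) − A_{ii}) − ∑_{j ≠ i} (A_{ji})² = (trace(A))²/8 + (A_{ii})² holds if and only if A_{ji} = 0 for every j ≠ i and trace(A) = 4·A_{ii} (equivalently, ∑_{j ≠ i} A_{jj} = 3·A_{ii}). -/
/-- Equality case of the algebraic core of the Ricci curvature inequality:
for a real symmetric `m × m` matrix `A` and an index `i`, equality
`A i i * (tr A - A i i) - ∑_{j ≠ i} (A j i)² = (tr A)²/8 + (A i i)²`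
holds iff `A j i = 0` for every `j ≠ i` and `tr A = 4 * A i i`. -/
theorem ricci_equality_core (m : ℕ) (hm : 1 ≤ m)
    (A : Matrix (Fin m) (Fin m) ℝ) (hA : A.IsSymm) (i : Fin m) :
    A i i * (A.trace - A i i) - ∑ j ∈ Finset.univ.erase i, (A j i) ^ 2 =
      (A.trace) ^ 2 / 8 + (A i i) ^ 2 ↔
    (∀ j, j ≠ i → A j i = 0) ∧ A.trace = 4 * A i i := by
  set t := A.trace with ht
  set a := A i i with ha
  set S := ∑ j ∈ Finset.univ.erase i, (A j i) ^ 2 with hS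
  have hSnonneg : 0 ≤ S := Finset.sum_nonneg fun j _ => sq_nonneg _
  constructor
  · intro h
    have hsq : 0 ≤ (t - 4 * a) ^ 2 := sq_nonneg _
    have hS0 : S = 0 := by nlinarith
    have hteq : (t - 4 * a) ^ 2 = 0 := by nlinarith
    constructor
    · intro j hj
      have := (Finset.sum_eq_zero_iff_of_nonneg
        (fun j _ => sq_nonneg (A j i))).1 hS0 j (Finset.mem_erase.2 ⟨hj, Finset.mem_univ j⟩)
      exact pow_eq_zero_iff (n := 2) (by norm_num) |>.1 this
    · have := pow_eq_zero_iff (n := 2) (by norm_num) |>.1 hteq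
      linarith
  · rintro ⟨hz, htr⟩
    have hS0 : S = 0 := Finset.sum_eq_zero fun j hj => by
      rw [hz j (Finset.mem_erase.1 hj).1]; ring
    rw [hS0, htr]; ring
end

section
/- For every real t > 0, one has 2·tanh(2t) ≠ 3·tanh(t) − coth(t) and 2·tanh(2t) ≠ 3·coth(t) − tanh(t). -/
open Real

/-- For every `t > 0`, `2 tanh (2t) ≠ 3 tanh t - coth t` and
`2 tanh (2t) ≠ 3 coth t - tanh t`. -/
theorem tanh_equations_no_solution (t : ℝ) (ht : 0 < t) :
    2 * Real.tanh (2 * t) ≠ 3 * Real.tanh t - Real.cosh t / Real.sinh t ∧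
      2 * Real.tanh (2 * t) ≠
        3 * (Real.cosh t / Real.sinh t) - Real.tanh t := by
  have hs : 0 < Real.sinh t := Real.sinh_pos_iff.2 ht
  have hc : 0 < Real.cosh t := Real.cosh_pos _
  have hc2 : 0 < Real.cosh (2 * t) := Real.cosh_pos _
  have hid : Real.cosh t ^ 2 - Real.sinh t ^ 2 = 1 := Real.cosh_sq_sub_sinh_sq t
  have ht2 : Real.tanh (2 * t) = Real.sinh (2 * t) / Real.cosh (2 * t) :=
    Real.tanh_eq_sinh_div_cosh _
  have hsinh2 : Real.sinh (2 * t) = 2 * Real.sinh t * Real.cosh t :=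
    Real.sinh_two_mul t
  have hcosh2 : Real.cosh (2 * t) = Real.cosh t ^ 2 + Real.sinh t ^ 2 :=
    Real.cosh_two_mul t
  have htt : Real.tanh t = Real.sinh t / Real.cosh t := Real.tanh_eq_sinh_div_cosh t
  constructor
  · intro h
    rw [ht2, hsinh2, hcosh2, htt] at h
    have hc2' : Real.cosh t ^ 2 + Real.sinh t ^ 2 ≠ 0 := by nlinarith
    field_simp at h
    nlinarith [sq_nonneg (Real.sinh t), sq_nonneg (Real.cosh t),
      sq_nonneg (Real.sinh t * Real.cosh t), mul_pos hs hc]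
  · intro h
    rw [ht2, hsinh2, hcosh2, htt] at h
    have hc2' : Real.cosh t ^ 2 + Real.sinh t ^ 2 ≠ 0 := by nlinarith
    field_simp at h
    nlinarith [sq_nonneg (Real.sinh t), sq_nonneg (Real.cosh t),
      sq_nonneg (Real.sinh t * Real.cosh t), mul_pos hs hc]
end

section
/- Let α, β, γ, μ, c be real numbers with β ≠ 0 satisfying the three equations: (1) α + γ − 3μ = 0; (2) β² + γ² + μ(α − 2γ) + c = 0; (3) (γ − μ)(γ² − αγ − c) + β²(2γ + μ) = 0. Then c < 0 and there exists a real number u with −1 < u < 1 such that μ = √(−c)·u, γ = √(−c)·u³, α = √(−c)·(3u − u³), and β² = (−c)·(1 − u²)³. -/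
/-- Constant solutions of the 2-Hopf structure system are the shape operators
of the Lohnherr hypersurface and its equidistant hypersurfaces in ℂH². -/
theorem lohnherr_classification (α β γ μ c : ℝ) (hβ : β ≠ 0)
    (h1 : α + γ - 3 * μ = 0)
    (h2 : β ^ 2 + γ ^ 2 + μ * (α - 2 * γ) + c = 0)
    (h3 : (γ - μ) * (γ ^ 2 - α * γ - c) + β ^ 2 * (2 * γ + μ) = 0) :
    c < 0 ∧ ∃ u : ℝ, -1 < u ∧ u < 1 ∧
      μ = Real.sqrt (-c) * u ∧
      γ = Real.sqrt (-c) * u ^ 3 ∧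
      α = Real.sqrt (-c) * (3 * u - u ^ 3) ∧
      β ^ 2 = (-c) * (1 - u ^ 2) ^ 3 := by
  have hb2 : (0:ℝ) < β ^ 2 := by positivity
  have h2' : β ^ 2 + γ ^ 2 - 3 * μ * γ + 3 * μ ^ 2 + c = 0 := by
    linear_combination h2 - μ * h1
  have hc : c < 0 := by nlinarith [sq_nonneg (2 * γ - 3 * μ), sq_nonneg μ, hb2, h2']
  have hmu : μ ^ 3 = -c * γ := by
    linear_combination (-(1/3 : ℝ)) * h3 + ((2 * γ + μ)/3) * h2 +
      (-(γ ^ 2 + μ * γ + μ ^ 2)/3) * h1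
  set k := Real.sqrt (-c) with hk
  have hkpos : 0 < k := Real.sqrt_pos.mpr (by linarith)
  have hkne : k ≠ 0 := ne_of_gt hkpos
  have hk2 : k ^ 2 = -c := Real.sq_sqrt (by linarith)
  set u : ℝ := μ / k with hu
  have hμeq : μ = k * u := by rw [hu]; field_simp
  have hγeq : γ = k * u ^ 3 := by
    have h4 : k ^ 2 * γ = μ ^ 3 := by rw [hk2]; linarith [hmu]
    rw [hu]; field_simp
    nlinarith [h4]
  have hαeq : α = k * (3 * u - u ^ 3) := by
    have : α = 3 * μ - γ := by linarith
    rw [this, hμeq, hγeq]; ring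
  have hβeq : β ^ 2 = (-c) * (1 - u ^ 2) ^ 3 := by
    rw [← hk2]
    have h2' : β ^ 2 + γ ^ 2 + μ * (α - 2 * γ) + c = 0 := h2
    rw [hμeq, hγeq, hαeq] at h2'
    have hc' : c = -(k ^ 2) := by linarith [hk2]
    rw [hc'] at h2'
    nlinarith [h2']
  have hcube : 0 < (1 - u ^ 2) ^ 3 := by
    by_contra h
    push_neg at h
    nlinarith [hβeq, hb2, hk2]
  have hu2 : u ^ 2 < 1 := by nlinarith [hcube, sq_nonneg (1 - u ^ 2)]
  exact ⟨hc, u, by nlinarith [hu2, sq_nonneg (u + 1)],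
    by nlinarith [hu2, sq_nonneg (u - 1)], hμeq, hγeq, hαeq, hβeq⟩
end

section
/- Let c < 0 be a real number and let u be a real number with −1 < u < 1. Define α = √(−c)·(3u − u³), β = √(−c)·(1 − u²)^{3/2}, γ = √(−c)·u³, and μ = √(−c)·u. Then β > 0 and the three equations hold: (1) α + γ − 3μ = 0; (2) β² + γ² + μ(α − 2γ) + c = 0; (3) (γ − μ)(γ² − αγ − c) + β²(2γ + μ) = 0. -/
/-- The shape operator data of the Lohnherr hypersurface and of its
equidistant hypersurfaces in ℂH²(4c) satisfy the equilibrium conditions of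
the 2-Hopf structure system. -/
theorem lohnherr_satisfies_system (c u : ℝ) (hc : c < 0)
    (hu1 : -1 < u) (hu2 : u < 1) :
    let α := Real.sqrt (-c) * (3 * u - u ^ 3)
    let β := Real.sqrt (-c) * (1 - u ^ 2) ^ ((3 : ℝ) / 2)
    let γ := Real.sqrt (-c) * u ^ 3
    let μ := Real.sqrt (-c) * u
    0 < β ∧
      α + γ - 3 * μ = 0 ∧
      β ^ 2 + γ ^ 2 + μ * (α - 2 * γ) + c = 0 ∧
      (γ - μ) * (γ ^ 2 - α * γ - c) + β ^ 2 * (2 * γ + μ) = 0 := by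
  intro α β γ μ
  have hcpos : (0 : ℝ) < -c := by linarith
  have hs : 0 < Real.sqrt (-c) := Real.sqrt_pos.mpr hcpos
  have hs2 : Real.sqrt (-c) ^ 2 = -c := Real.sq_sqrt hcpos.le
  have hv : (0 : ℝ) < 1 - u ^ 2 := by nlinarith
  have hβpos : 0 < β := by
    exact mul_pos hs (Real.rpow_pos_of_pos hv _)
  have hβ2 : β ^ 2 = (-c) * (1 - u ^ 2) ^ 3 := by
    have : ((1 - u ^ 2) ^ ((3:ℝ)/2)) ^ 2 = (1 - u ^ 2) ^ 3 := by
      rw [← Real.rpow_natCast ((1 - u ^ 2) ^ ((3:ℝ)/2)) 2, ← Real.rpow_mul hv.le]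
      norm_num
    simp only [β, mul_pow, hs2, this]
  refine ⟨hβpos, by simp only [α, γ, μ]; ring, ?_, ?_⟩
  · simp only [α, γ, μ]
    linear_combination hβ2 + (u^6 + 3*u^2 - 3*u^4) * hs2
  · simp only [α, γ, μ]
    linear_combination (Real.sqrt (-c) * (2*u^3 + u)) * hβ2 +
      (Real.sqrt (-c) * (u^3 - u) * (2*u^6 - 3*u^4)) * hs2
end

section
/- Let β, γ, μ, c, χ₁ be real numbers with β ≠ 0. Suppose that β·χ₁ − β² + 3γμ − 2γ² + c = 0 and that (χ₁ − 3β)·2((μ − 2γ)χ₁ + (6μ − 10γ)β) − (χ₁² + 3βχ₁ − 12β² + 2γ² − 7γμ + 3μ² + c)·(3μ − 4γ) = 0. Then 4β⁴(4γ − μ) + β²(16γ³ + 2cμ − 56γ²μ + 48γμ² − 9μ³) − μ(c − 2γ² + 3γμ)² = 0. -/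
/-- Elimination of `χ₁` from equation (eq2) and the vanishing determinant
condition yields the polynomial identity (eq7). -/
theorem elimination_eq7 (β γ μ c χ₁ : ℝ) (hβ : β ≠ 0)
    (h1 : β * χ₁ - β ^ 2 + 3 * γ * μ - 2 * γ ^ 2 + c = 0)
    (h2 : (χ₁ - 3 * β) *
          (2 * ((μ - 2 * γ) * χ₁ + (6 * μ - 10 * γ) * β)) -
        (χ₁ ^ 2 + 3 * β * χ₁ - 12 * β ^ 2 + 2 * γ ^ 2 - 7 * γ * μ +
            3 * μ ^ 2 + c) * (3 * μ - 4 * γ) = 0) :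
    4 * β ^ 4 * (4 * γ - μ) +
        β ^ 2 * (16 * γ ^ 3 + 2 * c * μ - 56 * γ ^ 2 * μ +
          48 * γ * μ ^ 2 - 9 * μ ^ 3) -
      μ * (c - 2 * γ ^ 2 + 3 * γ * μ) ^ 2 = 0 := by
  linear_combination β ^ 2 * h2 - (μ * c + 3 * γ * μ ^ 2 - 2 * γ ^ 2 * μ - β * μ * χ₁ - 4 * β ^ 2 * μ + 4 * β ^ 2 * γ) * h1
end
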